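/- (Quantitative form of Theorem 4, case 2 < p < ∞.) Let d ≥ 1, p ∈ (2,∞) with conjugate exponent q ∈ (1,2), σ > 0, η > 0, and set ε = η d^{1/p} σ. Let w ∈ ℝ^d with w ≠ 0, b' ∈ ℝ, and μ ∈ ℝ^d with w·μ ≥ ε‖w‖_q. Then 1 − (1/2)[Φ((w·μ + b')/(‖w‖₂σ) − (‖w‖_q/‖w‖₂)(ε/σ)) + Φ((w·μ − b')/(‖w‖₂σ) − (‖w‖_q/‖w‖₂)(ε/σ))] ≥ 1 − Φ(‖μ‖₂/σ − η d^{1/p}). In particular, the ℓp-adversarial-error rate of any such linear classifier on balanced Gaussian mixture data is at least 1 − Φ(‖μ‖₂/σ − η d^{1/p}). -/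

import Mathlib

open MeasureTheory ProbabilityTheory
open scoped ENNReal NNReal

/-- Euclidean inner product on `ℝ^d`. -/
noncomputable def dotp {d : ℕ} (w x : Fin d → ℝ) : ℝ := ∑ i, w i * x i

/-- The `ℓ₂` norm on `ℝ^d`. -/
noncomputable def l2 {d : ℕ} (w : Fin d → ℝ) : ℝ := Real.sqrt (∑ i, (w i)^2)

/-- The product Gaussian measure `N(m, σ²I_d)` on `ℝ^d`. -/
noncomputable def gaussPi {d : ℕ} (m : Fin d → ℝ) (σ : ℝ) : Measure (Fin d → ℝ) :=
  Measure.pi fun i => gaussianReal (m i) ((σ^2).toNNReal)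

/-- The standard normal cumulative distribution function `Φ`. -/
noncomputable def Phi (x : ℝ) : ℝ := ((gaussianReal 0 1) (Set.Iic x)).toReal

/-- The `ℓp` norm on `ℝ^d` for `p ∈ [1,∞]` (as an extended real exponent). -/
noncomputable def lpnorm {d : ℕ} (p : ℝ≥0∞) (v : Fin d → ℝ) : ℝ :=
  if p = ∞ then ⨆ i, |v i| else (∑ i, |v i| ^ p.toReal) ^ (1 / p.toReal)

/-- The `ℓp` norm on `ℝ^d` for a real exponent `p ∈ [1,∞)`. -/
noncomputable def lpR {d : ℕ} (p : ℝ) (v : Fin d → ℝ) : ℝ := (∑ i, |v i| ^ p) ^ (1/p)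

lemma Phi_eq (x : ℝ) : Phi x = ∫ t in Set.Iic x, gaussianPDFReal 0 1 t := by
  unfold Phi
  rw [gaussianReal_apply_eq_integral 0 one_ne_zero]
  exact ENNReal.toReal_ofReal
    (setIntegral_nonneg measurableSet_Iic fun t _ => gaussianPDFReal_nonneg 0 1 t)

lemma Phi_mono : Monotone Phi := fun x y hxy =>
  ENNReal.toReal_mono (measure_ne_top _ _) (measure_mono (Set.Iic_subset_Iic.mpr hxy))

lemma gpdf_le {c u : ℝ} (hc : 0 ≤ c) (hu : 0 ≤ u) :
    gaussianPDFReal 0 1 (c + u) ≤ gaussianPDFReal 0 1 (c - u) := by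
  simp only [gaussianPDFReal, NNReal.coe_one, mul_one, sub_zero]
  have h1 : (0:ℝ) ≤ (Real.sqrt (2 * Real.pi))⁻¹ := by positivity
  refine mul_le_mul_of_nonneg_left ?_ h1
  apply Real.exp_le_exp.mpr
  have h2 : (c - u)^2 ≤ (c + u)^2 := by nlinarith
  linarith

lemma Phi_two_le {c : ℝ} (hc : 0 ≤ c) (s : ℝ) :
    Phi (c + s) + Phi (c - s) ≤ 2 * Phi c := by
  wlog hs : 0 ≤ s generalizing s
  · have := this (-s) (by linarith)
    rw [sub_neg_eq_add, ← sub_eq_add_neg] at this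
    linarith
  set g := gaussianPDFReal (0:ℝ) 1 with hg
  have hint : Integrable g := integrable_gaussianPDFReal 0 1
  have h1 : Phi (c + s) - Phi c = ∫ t in c..(c+s), g t := by
    rw [Phi_eq, Phi_eq]
    exact intervalIntegral.integral_Iic_sub_Iic hint.integrableOn hint.integrableOn
  have h2 : Phi c - Phi (c - s) = ∫ t in (c-s)..c, g t := by
    rw [Phi_eq, Phi_eq]
    exact intervalIntegral.integral_Iic_sub_Iic hint.integrableOn hint.integrableOn
  have h3 : (∫ u in (0:ℝ)..s, g (c + u)) = ∫ t in c..(c+s), g t := by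
    rw [intervalIntegral.integral_comp_add_left g, add_zero]
  have h4 : (∫ u in (0:ℝ)..s, g (c - u)) = ∫ t in (c-s)..c, g t := by
    rw [intervalIntegral.integral_comp_sub_left g, sub_zero]
  have h5 : (∫ u in (0:ℝ)..s, g (c + u)) ≤ ∫ u in (0:ℝ)..s, g (c - u) := by
    apply intervalIntegral.integral_mono_on hs
    · have hIa : IntervalIntegrable g volume c (c+s) := hint.intervalIntegrable
      simpa using hIa.comp_add_left c
    · have hIb : IntervalIntegrable g volume (c-s) c := hint.intervalIntegrable
      simpa using (hIb.comp_sub_left c).symm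
    · intro x hx
      exact gpdf_le hc hx.1
  linarith

lemma l2_le_rpow {d : ℕ} {r : ℝ} (hr : 0 < r) (hr2 : r ≤ 2) (v : Fin d → ℝ) :
    l2 v ≤ (∑ i, |v i| ^ r) ^ (1/r) := by
  have hS0 : 0 ≤ ∑ i, |v i| ^ r :=
    Finset.sum_nonneg fun i _ => Real.rpow_nonneg (abs_nonneg _) r
  set S := ∑ i, |v i| ^ r with hS
  rcases eq_or_lt_of_le hS0 with hS0' | hSpos
  · have hv : ∀ i, v i = 0 := by
      intro i
      have h1 := (Finset.sum_eq_zero_iff_of_nonneg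
        (fun i _ => Real.rpow_nonneg (abs_nonneg (v i)) r)).mp hS0'.symm i (Finset.mem_univ i)
      have h2 := (Real.rpow_eq_zero (abs_nonneg _) (ne_of_gt hr)).mp h1
      simpa using h2
    have : l2 v = 0 := by simp [l2, hv]
    rw [this]
    exact Real.rpow_nonneg hS0 _
  · have key : ∀ i, (v i)^2 ≤ |v i| ^ r * S ^ ((2 - r)/r) := by
      intro i
      rcases eq_or_ne (v i) 0 with h0 | h0
      · simp [h0]
        positivity
      · have hvi : 0 < |v i| := abs_pos.mpr h0
        have h1 : (v i)^2 = |v i| ^ r * |v i| ^ (2 - r) := by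
          rw [← Real.rpow_add hvi, add_sub_cancel]
          rw [show ((2:ℝ) = ((2:ℕ):ℝ)) by norm_num, Real.rpow_natCast, sq_abs]
        have h2 : |v i| ≤ S ^ (1/r) := by
          have h3 : |v i| ^ r ≤ S :=
            Finset.single_le_sum (fun j _ => Real.rpow_nonneg (abs_nonneg _) r)
              (Finset.mem_univ i)
          calc |v i| = (|v i| ^ r) ^ (1/r) := by
                rw [one_div, Real.rpow_rpow_inv (abs_nonneg _) (ne_of_gt hr)]
            _ ≤ S ^ (1/r) := Real.rpow_le_rpow (Real.rpow_nonneg (abs_nonneg _) r) h3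
                (by positivity)
        have h4 : |v i| ^ (2 - r) ≤ (S ^ (1/r)) ^ (2 - r) :=
          Real.rpow_le_rpow (abs_nonneg _) h2 (by linarith)
        have h5 : (S ^ (1/r)) ^ (2 - r) = S ^ ((2 - r)/r) := by
          rw [← Real.rpow_mul hS0]
          ring_nf
        rw [h1, ← h5]
        exact mul_le_mul_of_nonneg_left h4 (Real.rpow_nonneg (abs_nonneg _) r)
    have hsum : ∑ i, (v i)^2 ≤ S * S ^ ((2 - r)/r) := by
      calc ∑ i, (v i)^2 ≤ ∑ i, |v i| ^ r * S ^ ((2 - r)/r) :=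
            Finset.sum_le_sum fun i _ => key i
        _ = S * S ^ ((2 - r)/r) := by rw [← Finset.sum_mul]
    have hSS : S * S ^ ((2 - r)/r) = (S ^ (1/r))^2 := by
      have e1 : S * S ^ ((2 - r)/r) = S ^ (1 + (2 - r)/r) := by
        rw [Real.rpow_add hSpos, Real.rpow_one]
      have e2 : (S ^ (1/r))^2 = S ^ (1/r * 2) := by
        rw [← Real.rpow_natCast (S ^ (1/r)) 2, ← Real.rpow_mul hS0]
        norm_num
      rw [e1, e2]
      congr 1
      field_simp
      ring
    rw [hSS] at hsum
    calc l2 v ≤ Real.sqrt ((S ^ (1/r))^2) := Real.sqrt_le_sqrt hsum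
      _ = S ^ (1/r) := Real.sqrt_sq (Real.rpow_nonneg hS0 _)

/-- Theorem 4, case `2 < p < ∞`: with `ε = η d^{1/p} σ` and
`w·μ ≥ ε‖w‖_q`, the `ℓp`-adversarial-error rate is at least
`1 − Φ(‖μ‖₂/σ − η d^{1/p})`. -/
theorem lp_adversarial_error_bound_large_p {d : ℕ} (hd : 1 ≤ d)
    (p q : ℝ≥0∞) (hp2 : 2 < p) (hptop : p ≠ ∞) (hpq : 1/p + 1/q = 1)
    (σ η : ℝ) (hσ : 0 < σ) (hη : 0 < η)
    (ε : ℝ) (hε : ε = η * (d : ℝ) ^ (1 / p.toReal) * σ)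
    (w : Fin d → ℝ) (hw : w ≠ 0) (b' : ℝ)
    (μ : Fin d → ℝ) (h : ε * lpnorm q w ≤ dotp w μ) :
    1 - (1/2) * (Phi ((dotp w μ + b') / (l2 w * σ) - (lpnorm q w / l2 w) * (ε / σ)) +
                  Phi ((dotp w μ - b') / (l2 w * σ) - (lpnorm q w / l2 w) * (ε / σ))) ≥
      1 - Phi (l2 μ / σ - η * (d : ℝ) ^ (1 / p.toReal)) := by
  -- exponent facts
  have hp0 : p ≠ 0 := (zero_lt_two.trans hp2).ne'
  have hpinv : p⁻¹ ≤ 2⁻¹ := ENNReal.inv_le_inv.mpr hp2.le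
  have hq_eq : q⁻¹ = 1 - p⁻¹ := by
    rw [one_div, one_div] at hpq
    exact ENNReal.eq_sub_of_add_eq (by simp [hp0]) (by rw [add_comm]; exact hpq)
  have hq0 : q ≠ 0 := by
    rw [← ENNReal.inv_ne_top, hq_eq]
    exact (lt_of_le_of_lt tsub_le_self ENNReal.one_lt_top).ne
  have h2q : (2:ℝ≥0∞)⁻¹ ≤ q⁻¹ := by
    rw [hq_eq]
    calc (2:ℝ≥0∞)⁻¹ = 1 - 2⁻¹ := ENNReal.one_sub_inv_two.symm
      _ ≤ 1 - p⁻¹ := tsub_le_tsub_left hpinv 1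
  have hqtop : q ≠ ∞ := by
    intro hq
    rw [hq] at h2q
    simp at h2q
  have hq2 : q ≤ 2 := ENNReal.inv_le_inv.mp h2q
  set r := q.toReal with hr_def
  have hr : 0 < r := ENNReal.toReal_pos hq0 hqtop
  have hr2 : r ≤ 2 := by
    have := ENNReal.toReal_mono (by norm_num : (2:ℝ≥0∞) ≠ ∞) hq2
    simpa using this
  have hLq_eq : lpnorm q w = (∑ i, |w i| ^ r) ^ (1/r) := by
    rw [lpnorm, if_neg hqtop]
  -- positivity facts
  have hL2 : 0 < l2 w := by
    have hex : ∃ i, w i ≠ 0 := by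
      by_contra h'
      push_neg at h'
      exact hw (funext h')
    obtain ⟨i, hi⟩ := hex
    exact Real.sqrt_pos.mpr (Finset.sum_pos' (fun j _ => sq_nonneg _)
      ⟨i, Finset.mem_univ i, by positivity⟩)
  have hd1 : (1:ℝ) ≤ (d:ℝ) := by exact_mod_cast hd
  have he : 0 < η * (d : ℝ) ^ (1 / p.toReal) :=
    mul_pos hη (Real.rpow_pos_of_pos (by linarith) _)
  have hεpos : 0 < ε := by rw [hε]; positivity
  have hεσ : ε / σ = η * (d : ℝ) ^ (1 / p.toReal) := by
    rw [hε]
    field_simp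
  -- norms
  have hL2Lq : l2 w ≤ lpnorm q w := by
    rw [hLq_eq]
    exact l2_le_rpow hr hr2 w
  have hCS : dotp w μ ≤ l2 w * l2 μ := Real.sum_mul_le_sqrt_mul_sqrt Finset.univ w μ
  -- main quantities
  set Lq := lpnorm q w
  set c := dotp w μ / (l2 w * σ) - (Lq / l2 w) * (ε / σ) with hc_def
  set s := b' / (l2 w * σ) with hs_def
  have harg1 : (dotp w μ + b') / (l2 w * σ) - (Lq / l2 w) * (ε / σ) = c + s := by
    rw [hc_def, hs_def, add_div]
    ring
  have harg2 : (dotp w μ - b') / (l2 w * σ) - (Lq / l2 w) * (ε / σ) = c - s := by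
    rw [hc_def, hs_def, sub_div]
    ring
  have hc0 : 0 ≤ c := by
    have he1 : (Lq / l2 w) * (ε / σ) = (ε * Lq) / (l2 w * σ) := by
      field_simp
    rw [hc_def, he1, sub_nonneg]
    exact div_le_div_of_nonneg_right h (by positivity) |>.trans_eq rfl
  have hct : c ≤ l2 μ / σ - η * (d : ℝ) ^ (1 / p.toReal) := by
    have h1 : 1 ≤ Lq / l2 w := (one_le_div hL2).mpr hL2Lq
    have heσpos : 0 < ε / σ := by rw [hεσ]; exact he
    have h2 : ε / σ ≤ (Lq / l2 w) * (ε / σ) := le_mul_of_one_le_left heσpos.le h1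
    have h3 : dotp w μ / (l2 w * σ) ≤ l2 μ / σ := by
      have : dotp w μ / (l2 w * σ) ≤ (l2 w * l2 μ) / (l2 w * σ) :=
        div_le_div_of_nonneg_right hCS (by positivity) |>.trans_eq rfl
      calc dotp w μ / (l2 w * σ) ≤ (l2 w * l2 μ) / (l2 w * σ) := this
        _ = l2 μ / σ := by
            rw [mul_div_mul_left _ _ (ne_of_gt hL2)]
    rw [hc_def]
    linarith [hεσ]
  have hkey := Phi_two_le hc0 s
  have hmono := Phi_mono hct
  rw [harg1, harg2]
  linarith
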